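/- Let d ≥ 2 and for each integer K ≥ 1 define the optimal K-point quantization distortion of the uniform sphere source: D*(K) = inf over nonempty finite sets C ⊂ ℝ^d with |C| ≤ K of ∫_{S^{d−1}} min_{o∈C} ‖z − o‖₂² dσ̄(z), where σ̄ is the uniform probability measure on S^{d−1}. Then limsup as K → ∞ of K^{2/(d−1)} · D*(K) is at most C_d := Γ(1 + 2/(d−1)) · (2·√π · Γ((d+1)/2)/Γ(d/2))^{2/(d−1)}. -/

import Mathlib

open MeasureTheory

/-- The uniform (rotation-invariant) probability measure on the unit sphere, characterized as a
probability measure supported on the sphere and invariant under all linear isometries. -/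
def IsUniformOnSphere {ι : Type*} [Fintype ι] (μ : Measure (EuclideanSpace ℝ ι)) : Prop :=
  IsProbabilityMeasure μ ∧
  μ (Metric.sphere (0 : EuclideanSpace ℝ ι) 1)ᶜ = 0 ∧
  ∀ R : EuclideanSpace ℝ ι ≃ₗᵢ[ℝ] EuclideanSpace ℝ ι, Measure.map R μ = μ

open Metric Set Filter
open scoped ENNReal NNReal

noncomputable def ballC (n : ℕ) : ℝ := Real.sqrt Real.pi ^ n / Real.Gamma ((n : ℝ) / 2 + 1)

lemma ballC_pos (n : ℕ) : 0 < ballC n :=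
  div_pos (pow_pos (Real.sqrt_pos.2 Real.pi_pos) n) (Real.Gamma_pos_of_pos (by positivity))

noncomputable def nCst (n : ℕ) : ℝ := ballC n / (((n : ℝ) + 1) * ballC (n + 1))

lemma nCst_pos (n : ℕ) : 0 < nCst n :=
  div_pos (ballC_pos n) (mul_pos (by positivity) (ballC_pos (n + 1)))

noncomputable def nGam (n : ℕ) (s : ℝ) : ℝ := (1 - s ^ 2 / 2) * Real.sqrt (1 - s ^ 2 / 4) ^ n

lemma euclidean_volume_closedBall (m : ℕ) (hm : 1 ≤ m) {R : ℝ} (hR : 0 ≤ R) :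
    volume (Metric.closedBall (0 : EuclideanSpace ℝ (Fin m)) R)
      = ENNReal.ofReal (R ^ m * ballC m) := by
  haveI : Nonempty (Fin m) := ⟨⟨0, hm⟩⟩
  rw [EuclideanSpace.volume_closedBall]
  rw [← ENNReal.ofReal_pow hR, ← ENNReal.ofReal_mul (by positivity)]
  simp [Fintype.card_fin, ballC]

lemma norm_sq_eq_sum (n : ℕ) (x : EuclideanSpace ℝ (Fin (n+1))) :
    ‖x‖ ^ 2 = x 0 ^ 2 + ∑ j : Fin n, x (Fin.succ j) ^ 2 := by
  rw [EuclideanSpace.norm_eq, Real.sq_sqrt (by positivity)]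
  rw [Fin.sum_univ_succ]
  simp [sq_abs]

lemma sector_vol (n : ℕ) (hn : 1 ≤ n) {a : ℝ} (ha0 : 0 < a) (ha1 : a < 1) :
    volume {x : EuclideanSpace ℝ (Fin (n+1)) | 0 < x 0 ∧ x 0 ≤ a ∧ a * ‖x‖ ≤ x 0}
      = ENNReal.ofReal (ballC n * (Real.sqrt (1 - a ^ 2) ^ n * a) / (n + 1)) := by
  set B : ℝ := Real.sqrt (1 - a ^ 2) / a with hBdef
  have hB : 0 ≤ B := by positivity
  have hB2 : B ^ 2 = (1 - a ^ 2) / a ^ 2 := by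
    rw [hBdef, div_pow, Real.sq_sqrt (by nlinarith)]
  set e1 := (MeasurableEquiv.toLp 2 (Fin (n+1) → ℝ)).symm with he1
  set e2 := MeasurableEquiv.piFinSuccAbove (fun _ : Fin (n+1) => ℝ) 0 with he2
  have hmp : MeasurePreserving (⇑e2 ∘ ⇑e1) volume volume :=
    (volume_preserving_piFinSuccAbove (fun _ : Fin (n+1) => ℝ) 0).comp
      (EuclideanSpace.volume_preserving_symm_measurableEquiv_toLp _)
  set T' : Set (ℝ × (Fin n → ℝ)) :=
    {p | 0 < p.1 ∧ p.1 ≤ a ∧ ∑ j, (p.2 j) ^ 2 ≤ (B * p.1) ^ 2} with hT'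
  have hT'meas : MeasurableSet T' := by
    apply MeasurableSet.inter
    · exact measurable_fst measurableSet_Ioi
    apply MeasurableSet.inter
    · exact measurable_fst measurableSet_Iic
    · show MeasurableSet {p : ℝ × (Fin n → ℝ) | ∑ j, (p.2 j) ^ 2 ≤ (B * p.1) ^ 2}
      apply measurableSet_le
      · exact Finset.measurable_sum _ fun j _ => ((measurable_pi_apply j).comp measurable_snd).pow_const 2
      · exact ((measurable_const.mul measurable_fst).pow_const 2)
  have hset : {x : EuclideanSpace ℝ (Fin (n+1)) | 0 < x 0 ∧ x 0 ≤ a ∧ a * ‖x‖ ≤ x 0}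
      = (⇑e2 ∘ ⇑e1) ⁻¹' T' := by
    ext x
    have happ : e2 (e1 x) = (x 0, fun j => x (Fin.succ j)) := by
      rw [he2]
      ext
      · rfl
      · simp [MeasurableEquiv.piFinSuccAbove, Fin.succAbove_zero]
        rfl
    simp only [mem_preimage, Function.comp_apply, happ, hT', mem_setOf_eq]
    have hnx := norm_sq_eq_sum n x
    constructor
    · rintro ⟨h1, h2, h3⟩
      refine ⟨h1, h2, ?_⟩
      have h4 : (a * ‖x‖) ^ 2 ≤ x 0 ^ 2 := pow_le_pow_left₀ (by positivity) h3 2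
      rw [mul_pow] at h4
      have ha2 : 0 < a ^ 2 := by positivity
      rw [mul_pow, hB2]
      rw [hnx] at h4
      rw [div_mul_eq_mul_div, le_div_iff₀ ha2]
      nlinarith
    · rintro ⟨h1, h2, h3⟩
      refine ⟨h1, h2, ?_⟩
      have hx2 : (a * ‖x‖) ^ 2 ≤ x 0 ^ 2 := by
        rw [mul_pow, hnx]
        rw [mul_pow, hB2, div_mul_eq_mul_div, le_div_iff₀ (by positivity)] at h3
        nlinarith
      have := Real.sqrt_le_sqrt hx2
      rwa [Real.sqrt_sq (by positivity), Real.sqrt_sq h1.le] at this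
  rw [hset, hmp.measure_preimage hT'meas.nullMeasurableSet]
  rw [Measure.volume_eq_prod, Measure.prod_apply hT'meas]
  have hslice : ∀ h : ℝ, volume (Prod.mk h ⁻¹' T')
      = (Ioc 0 a).indicator (fun h => ENNReal.ofReal ((B * h) ^ n * ballC n)) h := by
    intro h
    by_cases hh : h ∈ Ioc 0 a
    · rw [indicator_of_mem hh]
      have hsec : Prod.mk h ⁻¹' T'
          = ⇑(MeasurableEquiv.toLp 2 (Fin n → ℝ)).symm.symm ⁻¹'
              (Metric.closedBall (0 : EuclideanSpace ℝ (Fin n)) (B * h)) := by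
        ext y
        simp only [mem_preimage, hT', mem_setOf_eq, mem_closedBall, dist_zero_right]
        have hnorm : ‖(MeasurableEquiv.toLp 2 (Fin n → ℝ)).symm.symm y‖
            = Real.sqrt (∑ j, (y j) ^ 2) := by
          rw [EuclideanSpace.norm_eq]
          congr 1
          refine Finset.sum_congr rfl fun j _ => ?_
          rw [Real.norm_eq_abs, sq_abs]
          rfl
        rw [hnorm]
        constructor
        · rintro ⟨_, _, h3⟩
          have := Real.sqrt_le_sqrt h3
          rwa [Real.sqrt_sq (by positivity)] at this
        · intro hle
          refine ⟨hh.1, hh.2, ?_⟩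
          have := pow_le_pow_left₀ (Real.sqrt_nonneg _) hle 2
          rwa [Real.sq_sqrt (by positivity)] at this
      have hmp2 := (EuclideanSpace.volume_preserving_symm_measurableEquiv_toLp (Fin n)).symm
      rw [hsec, hmp2.measure_preimage measurableSet_closedBall.nullMeasurableSet]
      exact euclidean_volume_closedBall n hn (mul_nonneg hB hh.1.le)
    · rw [indicator_of_notMem hh]
      have hemp : Prod.mk h ⁻¹' T' = (∅ : Set (Fin n → ℝ)) := by
        ext y
        simp only [mem_preimage, hT', mem_setOf_eq, mem_empty_iff_false, iff_false]
        rintro ⟨h1, h2, _⟩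
        exact hh ⟨h1, h2⟩
      rw [hemp, measure_empty]
  rw [lintegral_congr hslice, lintegral_indicator measurableSet_Ioc]
  rw [← ofReal_integral_eq_lintegral_ofReal]
  · congr 1
    rw [← intervalIntegral.integral_of_le ha0.le]
    have : ∀ h : ℝ, (B * h) ^ n * ballC n = (B ^ n * ballC n) * h ^ n := fun h => by ring
    simp_rw [this]
    rw [intervalIntegral.integral_const_mul, integral_pow]
    rw [zero_pow (Nat.succ_ne_zero n)]
    have han : B ^ n * a ^ (n + 1) = Real.sqrt (1 - a ^ 2) ^ n * a := by
      rw [hBdef, div_pow, pow_succ]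
      field_simp
      ring
    rw [← han]
    push_cast
    ring
  · apply Continuous.integrableOn_Ioc
    continuity
  · refine (ae_restrict_iff' measurableSet_Ioc).2 (ae_of_all _ fun h hh => ?_)
    exact mul_nonneg (pow_nonneg (mul_nonneg hB hh.1.le) n) (ballC_pos n).le


lemma nCst_def (n : ℕ) : nCst n = ballC n / (((n : ℝ) + 1) * ballC (n + 1)) := rfl

lemma nGam_def (n : ℕ) (s : ℝ) : nGam n s = (1 - s ^ 2 / 2) * Real.sqrt (1 - s ^ 2 / 4) ^ n := rfl

lemma cap_const {n : ℕ} (μ : Measure (EuclideanSpace ℝ (Fin (n+1))))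
    (hinv : ∀ R : EuclideanSpace ℝ (Fin (n+1)) ≃ₗᵢ[ℝ] EuclideanSpace ℝ (Fin (n+1)),
      Measure.map R μ = μ)
    {y z : EuclideanSpace ℝ (Fin (n+1))} (hy : ‖y‖ = 1) (hz : ‖z‖ = 1) (r : ℝ) :
    μ (Metric.closedBall y r) = μ (Metric.closedBall z r) := by
  set R := Submodule.reflection (ℝ ∙ (y - z))ᗮ with hR
  have hRy : R y = z := Submodule.reflection_sub (hy.trans hz.symm)
  have hpre : (⇑R) ⁻¹' Metric.closedBall z r = Metric.closedBall y r := by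
    ext x
    simp only [mem_preimage, Metric.mem_closedBall]
    rw [← hRy, R.dist_map]
  rw [← hpre, ← Measure.map_apply R.continuous.measurable measurableSet_closedBall, hinv R]

lemma cap_lower (n : ℕ) (hn : 1 ≤ n) (μ : Measure (EuclideanSpace ℝ (Fin (n+1))))
    (hμ : IsUniformOnSphere μ) {z : EuclideanSpace ℝ (Fin (n+1))} (hz : ‖z‖ = 1)
    {r : ℝ} (hr0 : 0 < r) (hr1 : r ≤ 1) :
    ENNReal.ofReal (nCst n * (nGam n r * r ^ n)) ≤ μ (Metric.closedBall z r) := by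
  obtain ⟨hprob, hsupp, hinv⟩ := hμ
  haveI := hprob
  set f : EuclideanSpace ℝ (Fin (n+1)) → EuclideanSpace ℝ (Fin (n+1)) :=
    fun x => ‖x‖⁻¹ • x with hf
  have hfm : Measurable f := (measurable_norm.inv).smul measurable_id
  have hfnorm : ∀ x : EuclideanSpace ℝ (Fin (n+1)), x ≠ 0 → ‖f x‖ = 1 := by
    intro x hx
    rw [hf]
    simp only [norm_smul, norm_inv, norm_norm]
    exact inv_mul_cancel₀ (norm_ne_zero_iff.2 hx)
  set A : Set (EuclideanSpace ℝ (Fin (n+1))) := Metric.closedBall 0 1 \ {0} with hA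
  have hAm : MeasurableSet A := measurableSet_closedBall.diff (measurableSet_singleton 0)
  set a : ℝ := 1 - r ^ 2 / 2 with ha
  have ha0 : 0 < a := by rw [ha]; nlinarith
  have ha1 : a < 1 := by rw [ha]; nlinarith
  set e₀ : EuclideanSpace ℝ (Fin (n+1)) := EuclideanSpace.single (0 : Fin (n+1)) (1:ℝ) with he₀
  have he₀n : ‖e₀‖ = 1 := by rw [he₀, EuclideanSpace.norm_single]; norm_num
  set Vt : ℝ := ballC n * (Real.sqrt (1 - a ^ 2) ^ n * a) / (n + 1) with hVt
  have hVtpos : 0 < Vt := by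
    rw [hVt]
    have h1 : 0 < 1 - a ^ 2 := by nlinarith
    have := ballC_pos n
    positivity
  -- T ⊆ A ∩ {x | dist e₀ (f x) ≤ r}
  have hTsub : {x : EuclideanSpace ℝ (Fin (n+1)) | 0 < x 0 ∧ x 0 ≤ a ∧ a * ‖x‖ ≤ x 0}
      ⊆ A ∩ {x | dist e₀ (f x) ≤ r} := by
    rintro x ⟨h1, h2, h3⟩
    have hxne : x ≠ 0 := by
      intro h
      rw [h] at h1
      exact lt_irrefl 0 h1
    have hxnorm : 0 < ‖x‖ := norm_pos_iff.2 hxne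
    have hxle : ‖x‖ ≤ 1 := by nlinarith
    refine ⟨⟨Metric.mem_closedBall.2 (by rwa [dist_zero_right]), fun h => hxne h⟩, ?_⟩
    have hu : ‖f x‖ = 1 := hfnorm x hxne
    have hu0 : a ≤ f x 0 := by
      have hdiv : a ≤ x 0 / ‖x‖ := (le_div_iff₀ hxnorm).2 (by linarith)
      rw [hf]
      simp only [PiLp.smul_apply, smul_eq_mul]
      rwa [div_eq_inv_mul] at hdiv
    have hinner : inner ℝ e₀ (f x) = f x 0 := by
      rw [he₀, EuclideanSpace.inner_single_left]
      simp
    have hdist2 : dist e₀ (f x) ^ 2 ≤ r ^ 2 := by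
      rw [dist_eq_norm, norm_sub_sq_real, hinner, he₀n, hu]
      have haa : 1 - r ^ 2 / 2 ≤ f x 0 := by rw [← ha]; exact hu0
      nlinarith
    have := Real.sqrt_le_sqrt hdist2
    rwa [Real.sqrt_sq dist_nonneg, Real.sqrt_sq hr0.le] at this
  have hsetm : MeasurableSet {x | dist e₀ (f x) ≤ r} :=
    measurableSet_le (measurable_const.dist hfm) measurable_const
  -- sector volume lower bound, uniform over unit y
  have hsec : ∀ y : EuclideanSpace ℝ (Fin (n+1)), ‖y‖ = 1 →
      ENNReal.ofReal Vt ≤ volume.restrict A {x | dist y (f x) ≤ r} := by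
    intro y hy
    set R := Submodule.reflection (ℝ ∙ (y - e₀))ᗮ with hR
    have hRy : R y = e₀ := Submodule.reflection_sub (by rw [hy, he₀n])
    have hpre : (⇑R) ⁻¹' (A ∩ {x | dist e₀ (f x) ≤ r}) = A ∩ {x | dist y (f x) ≤ r} := by
      ext x
      simp only [mem_preimage, mem_inter_iff, mem_setOf_eq, hA, mem_diff,
        Metric.mem_closedBall, mem_singleton_iff]
      have h1 : dist (R x) 0 = dist x 0 := by
        rw [dist_zero_right, dist_zero_right, R.norm_map]
      have h2 : (R x = 0) ↔ (x = 0) := by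
        constructor
        · intro h
          have := congrArg R.symm h
          simpa using this
        · intro h
          simp [h]
      have h3 : f (R x) = R (f x) := by
        rw [hf]
        simp only
        rw [R.norm_map, _root_.map_smul]
      have h4 : dist e₀ (f (R x)) = dist y (f x) := by
        rw [h3, ← hRy, dist_comm, R.dist_map, dist_comm]
      rw [h1, h2, h4]
    have hmeas2 : MeasurableSet (A ∩ {x | dist e₀ (f x) ≤ r}) := hAm.inter hsetm
    rw [Measure.restrict_apply' hAm]
    have heq : volume ({x | dist y (f x) ≤ r} ∩ A) = volume (A ∩ {x | dist e₀ (f x) ≤ r}) := by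
      rw [inter_comm, ← hpre, R.measurePreserving.measure_preimage hmeas2.nullMeasurableSet]
    rw [heq]
    calc ENNReal.ofReal Vt
        = volume {x : EuclideanSpace ℝ (Fin (n+1)) | 0 < x 0 ∧ x 0 ≤ a ∧ a * ‖x‖ ≤ x 0} :=
          (sector_vol n hn ha0 ha1).symm
      _ ≤ volume (A ∩ {x | dist e₀ (f x) ≤ r}) := measure_mono hTsub
  -- Fubini symmetrization
  set S : Set (EuclideanSpace ℝ (Fin (n+1)) × EuclideanSpace ℝ (Fin (n+1))) :=
    {p | dist p.2 (f p.1) ≤ r} with hS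
  have hSm : MeasurableSet S :=
    measurableSet_le (measurable_snd.dist (hfm.comp measurable_fst)) measurable_const
  have key : μ (Metric.closedBall z r) * volume A
      = ∫⁻ y, volume.restrict A {x | dist y (f x) ≤ r} ∂μ := by
    have L1 : ∫⁻ x in A, μ (Metric.closedBall (f x) r) ∂volume
        = μ (Metric.closedBall z r) * volume A := by
      rw [setLIntegral_congr_fun hAm
        (fun x hx => cap_const μ hinv (hfnorm x hx.2) hz r)]
      simp [lintegral_const, Measure.restrict_apply MeasurableSet.univ]
    have L2 : ∀ x, μ (Metric.closedBall (f x) r)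
        = ∫⁻ y, S.indicator (fun _ => (1:ℝ≥0∞)) (x, y) ∂μ := by
      intro x
      have hfun : (fun y => S.indicator (fun _ => (1:ℝ≥0∞)) (x, y))
          = (Metric.closedBall (f x) r).indicator (fun _ => (1:ℝ≥0∞)) := by
        funext y
        simp only [indicator, hS, mem_setOf_eq, Metric.mem_closedBall]
      rw [hfun, lintegral_indicator measurableSet_closedBall, setLIntegral_one]
    have L3 : ∀ y, ∫⁻ x, S.indicator (fun _ => (1:ℝ≥0∞)) (x, y) ∂(volume.restrict A)
        = volume.restrict A {x | dist y (f x) ≤ r} := by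
      intro y
      have hfun : (fun x => S.indicator (fun _ => (1:ℝ≥0∞)) (x, y))
          = ({x | dist y (f x) ≤ r}).indicator (fun _ => (1:ℝ≥0∞)) := by
        funext x
        simp only [indicator, hS, mem_setOf_eq]
      have hm : MeasurableSet {x | dist y (f x) ≤ r} :=
        measurableSet_le (measurable_const.dist hfm) measurable_const
      rw [hfun, lintegral_indicator hm, setLIntegral_one]
    calc μ (Metric.closedBall z r) * volume A
        = ∫⁻ x in A, μ (Metric.closedBall (f x) r) ∂volume := L1.symm
      _ = ∫⁻ x, ∫⁻ y, S.indicator (fun _ => (1:ℝ≥0∞)) (x, y) ∂μ ∂(volume.restrict A) := by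
          exact lintegral_congr fun x => L2 x
      _ = ∫⁻ y, ∫⁻ x, S.indicator (fun _ => (1:ℝ≥0∞)) (x, y) ∂(volume.restrict A) ∂μ :=
          lintegral_lintegral_swap ((measurable_const.indicator hSm).aemeasurable)
      _ = ∫⁻ y, volume.restrict A {x | dist y (f x) ≤ r} ∂μ :=
          lintegral_congr fun y => L3 y
  -- lower bound the RHS
  have hsphere : μ (Metric.sphere (0 : EuclideanSpace ℝ (Fin (n+1))) 1) = 1 := by
    have h := measure_add_measure_compl (μ := μ)
      (s := Metric.sphere (0 : EuclideanSpace ℝ (Fin (n+1))) 1) isClosed_sphere.measurableSet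
    rw [hsupp, add_zero, measure_univ] at h
    exact h
  have hRHS : ENNReal.ofReal Vt ≤ ∫⁻ y, volume.restrict A {x | dist y (f x) ≤ r} ∂μ := by
    calc ENNReal.ofReal Vt = ENNReal.ofReal Vt * μ (Metric.sphere 0 1) := by
          rw [hsphere, mul_one]
      _ = ∫⁻ _ in Metric.sphere 0 1, ENNReal.ofReal Vt ∂μ := by
          rw [setLIntegral_const, mul_comm]
      _ ≤ ∫⁻ y in Metric.sphere 0 1, volume.restrict A {x | dist y (f x) ≤ r} ∂μ := by
          refine lintegral_mono_ae ?_
          filter_upwards [ae_restrict_mem isClosed_sphere.measurableSet] with y hy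
          exact hsec y (mem_sphere_zero_iff_norm.1 hy)
      _ ≤ ∫⁻ y, volume.restrict A {x | dist y (f x) ≤ r} ∂μ :=
          lintegral_mono' Measure.restrict_le_self le_rfl
  have hvolA : volume A = ENNReal.ofReal (ballC (n+1)) := by
    rw [hA, measure_diff_null (measure_singleton 0),
      euclidean_volume_closedBall (n+1) (by omega) zero_le_one, one_pow, one_mul]
  have hkey2 : ENNReal.ofReal Vt ≤ μ (Metric.closedBall z r) * ENNReal.ofReal (ballC (n+1)) := by
    rw [← hvolA, key]
    exact hRHS
  have hdiv : ENNReal.ofReal Vt / ENNReal.ofReal (ballC (n+1)) ≤ μ (Metric.closedBall z r) :=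
    ENNReal.div_le_of_le_mul hkey2
  have hfinal : ENNReal.ofReal (nCst n * (nGam n r * r ^ n))
      = ENNReal.ofReal Vt / ENNReal.ofReal (ballC (n+1)) := by
    rw [← ENNReal.ofReal_div_of_pos (ballC_pos (n+1))]
    congr 1
    have hsq : Real.sqrt (1 - a ^ 2) = r * Real.sqrt (1 - r ^ 2 / 4) := by
      have h1 : 1 - a ^ 2 = r ^ 2 * (1 - r ^ 2 / 4) := by rw [ha]; ring
      rw [h1, Real.sqrt_mul (sq_nonneg r), Real.sqrt_sq hr0.le]
    rw [hVt, hsq, nCst_def, nGam_def, mul_pow, ha, div_div]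
    ring
  rw [hfinal]
  exact hdiv

lemma continuous_finset_inf' {X ι : Type*} [TopologicalSpace X] (s : Finset ι)
    (f : ι → X → ℝ) (hf : ∀ i, Continuous (f i)) :
    ∀ (hs : s.Nonempty), Continuous fun x => s.inf' hs fun i => f i x := by
  induction s using Finset.cons_induction with
  | empty => exact fun hs => absurd hs (by simp)
  | cons a t ha ih =>
      intro hs
      rcases t.eq_empty_or_nonempty with rfl | ht
      · have he : (fun x => (Finset.cons a ∅ ha).inf' hs fun i => f i x) = f a := by
          funext x
          simp
        rw [he]
        exact hf a
      · have he : (fun x => (Finset.cons a t ha).inf' hs fun i => f i x)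
            = fun x => min (f a x) (t.inf' ht fun i => f i x) := by
          funext x
          rw [Finset.inf'_cons]
        rw [he]
        exact (hf a).min (ih ht)

lemma infDist_range_eq {X : Type*} [MetricSpace X] {K : ℕ}
    (hne : (Finset.univ : Finset (Fin K)).Nonempty) (c : Fin K → X) (z : X) :
    Metric.infDist z (Set.range c) = Finset.univ.inf' hne fun i => dist z (c i) := by
  apply le_antisymm
  · obtain ⟨i, _, hi⟩ := Finset.exists_mem_eq_inf' hne fun i => dist z (c i)
    rw [hi]
    exact Metric.infDist_le_dist_of_mem (Set.mem_range_self i)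
  · obtain ⟨i0, _⟩ := hne
    by_contra hlt
    push_neg at hlt
    obtain ⟨y, ⟨i, rfl⟩, hy⟩ :=
      (Metric.infDist_lt_iff ⟨c i0, Set.mem_range_self _⟩).1 hlt
    exact absurd hy (not_lt.2 (Finset.inf'_le _ (Finset.mem_univ i)))

lemma gauss_piece (n : ℕ) (hn : 1 ≤ n) {b R : ℝ} (hb : 0 < b) (hR : 0 < R) :
    ∫⁻ t in Ioc (0:ℝ) R, ENNReal.ofReal (Real.exp (-b * Real.sqrt t ^ n))
      ≤ ENNReal.ofReal (Real.Gamma (2 / n + 1) * b ^ (-(2 / (n:ℝ)))) := by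
  have hn0 : ((n:ℝ)) ≠ 0 := by positivity
  have hcf : Continuous fun t : ℝ => Real.exp (-b * Real.sqrt t ^ n) := by continuity
  rw [← ofReal_integral_eq_lintegral_ofReal (hcf.integrableOn_Ioc)
    (ae_of_all _ fun t => (Real.exp_pos _).le)]
  apply ENNReal.ofReal_le_ofReal
  -- substitute t = u^2
  have hIval : IntegrableOn (fun x : ℝ => x * Real.exp (-b * x ^ n)) (Ioi 0) := by
    have h := integrableOn_rpow_mul_exp_neg_mul_rpow
      (by norm_num : (-1:ℝ) < 1) (Nat.cast_pos.2 hn : (0:ℝ) < (n:ℝ)) hb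
    refine (integrableOn_congr_fun ?_ measurableSet_Ioi).1 h
    intro x hx
    simp only [Real.rpow_one, Real.rpow_natCast]
  have hIval2 : IntegrableOn (fun x : ℝ => 2 * (x * Real.exp (-b * x ^ n))) (Ioi 0) :=
    hIval.const_mul 2
  have hsub : ∫ t in Ioc (0:ℝ) R, Real.exp (-b * Real.sqrt t ^ n)
      = ∫ u in Ioc (0:ℝ) (Real.sqrt R), 2 * (u * Real.exp (-b * u ^ n)) := by
    rw [← intervalIntegral.integral_of_le hR.le,
      ← intervalIntegral.integral_of_le (Real.sqrt_nonneg R)]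
    simp only [neg_mul]
    have hd : ∀ u ∈ uIcc (0:ℝ) (Real.sqrt R),
        HasDerivAt (fun x : ℝ => x ^ 2) (2 * u) u := by
      intro u _
      simpa using hasDerivAt_pow 2 u
    have h5 := intervalIntegral.integral_comp_smul_deriv hd
      ((continuous_const.mul continuous_id).continuousOn) hcf
    rw [Real.sq_sqrt hR.le] at h5
    norm_num at h5
    rw [← h5]
    apply intervalIntegral.integral_congr
    intro u hu
    rw [uIcc_of_le (Real.sqrt_nonneg R)] at hu
    simp only [Function.comp_apply, smul_eq_mul]
    rw [Real.sqrt_sq hu.1]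
    ring
  rw [hsub]
  have hmono : ∫ u in Ioc (0:ℝ) (Real.sqrt R), 2 * (u * Real.exp (-b * u ^ n))
      ≤ ∫ u in Ioi (0:ℝ), 2 * (u * Real.exp (-b * u ^ n)) := by
    apply setIntegral_mono_set hIval2
    · refine (ae_restrict_iff' measurableSet_Ioi).2 (ae_of_all _ fun u hu => ?_)
      have : (0:ℝ) < u := hu
      positivity
    · exact HasSubset.Subset.eventuallyLE Ioc_subset_Ioi_self
  refine hmono.trans ?_
  rw [MeasureTheory.integral_const_mul]
  have hval : ∫ u in Ioi (0:ℝ), u * Real.exp (-b * u ^ n)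
      = b ^ (-((1:ℝ) + 1) / n) * (1 / n) * Real.Gamma (((1:ℝ) + 1) / n) := by
    rw [← integral_rpow_mul_exp_neg_mul_rpow (by positivity : (0:ℝ) < (n:ℝ))
      (by norm_num : (-1:ℝ) < 1) hb]
    apply setIntegral_congr_fun measurableSet_Ioi
    intro x hx
    simp only [Real.rpow_one, Real.rpow_natCast]
  rw [hval, Real.Gamma_add_one (by positivity)]
  have h2 : -((1:ℝ) + 1) / n = -(2 / (n:ℝ)) := by ring
  rw [h2]
  have h3 : ((1:ℝ) + 1) / n = 2 / (n:ℝ) := by ring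
  rw [h3]
  ring_nf
  exact le_refl _

set_option maxHeartbeats 2000000 in
lemma distortion_le (n K : ℕ) (hn : 1 ≤ n) (hK : 1 ≤ K)
    (μ : Measure (EuclideanSpace ℝ (Fin (n+1)))) (hμ : IsUniformOnSphere μ)
    {r₀ : ℝ} (h0 : 0 < r₀) (h1 : r₀ ≤ 1) {η : ℝ} (hη : 0 < η) :
    ∃ c : Fin K → EuclideanSpace ℝ (Fin (n+1)),
      ∫ z, Metric.infDist z (Set.range c) ^ 2 ∂μ ≤
        Real.Gamma (2 / (n:ℝ) + 1) * (nGam n r₀ * nCst n * (K:ℝ)) ^ (-(2 / (n:ℝ)))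
          + 4 * (1 - nCst n * nGam n r₀ * r₀ ^ n) ^ K + η := by
  haveI : IsProbabilityMeasure μ := hμ.1
  haveI : Nonempty (Fin K) := ⟨⟨0, hK⟩⟩
  have hne : (Finset.univ : Finset (Fin K)).Nonempty := Finset.univ_nonempty
  have hγ : 0 < nGam n r₀ := by
    rw [nGam_def]
    have h2 : (0:ℝ) < 1 - r₀ ^ 2 / 2 := by nlinarith
    have h3 : (0:ℝ) < 1 - r₀ ^ 2 / 4 := by nlinarith
    have h4 : (0:ℝ) < Real.sqrt (1 - r₀ ^ 2 / 4) := Real.sqrt_pos.2 h3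
    positivity
  have hcstpos := nCst_pos n
  have hKpos : (0:ℝ) < (K:ℝ) := by exact_mod_cast hK
  set κ : ℝ := nCst n * nGam n r₀ with hκ
  have hκpos : 0 < κ := mul_pos hcstpos hγ
  set q : ℝ := 1 - κ * r₀ ^ n with hqdef
  have hflb : κ * r₀ ^ n ≤ 1 := by
    have hz1 : ‖(EuclideanSpace.single (0 : Fin (n+1)) (1:ℝ))‖ = 1 := by
      rw [EuclideanSpace.norm_single]; norm_num
    have hcap := cap_lower n hn μ hμ hz1 h0 h1
    have hle : ENNReal.ofReal (nCst n * (nGam n r₀ * r₀ ^ n)) ≤ 1 := hcap.trans prob_le_one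
    have h2 := ENNReal.ofReal_le_one.1 hle
    calc κ * r₀ ^ n = nCst n * (nGam n r₀ * r₀ ^ n) := by rw [hκ]; ring
      _ ≤ 1 := h2
  have hflbpos : 0 < κ * r₀ ^ n := by positivity
  have hq0 : 0 ≤ q := by rw [hqdef]; linarith
  have hq1 : q < 1 := by rw [hqdef]; linarith
  set lam : ℝ := nGam n r₀ * nCst n * (K:ℝ) with hlam
  have hlampos : 0 < lam := by rw [hlam]; positivity
  set BK : ℝ := Real.Gamma (2 / (n:ℝ) + 1) * lam ^ (-(2 / (n:ℝ))) + 4 * q ^ K with hBK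
  have hBK0 : 0 ≤ BK := by
    have hΓ : 0 < Real.Gamma (2 / (n:ℝ) + 1) := Real.Gamma_pos_of_pos (by positivity)
    have hrp : (0:ℝ) ≤ lam ^ (-(2 / (n:ℝ))) := Real.rpow_nonneg hlampos.le _
    have hqK : (0:ℝ) ≤ q ^ K := pow_nonneg hq0 K
    rw [hBK]
    nlinarith
  set π : Measure (Fin K → EuclideanSpace ℝ (Fin (n+1))) := Measure.pi fun _ => μ with hπ
  haveI : IsProbabilityMeasure π := by rw [hπ]; infer_instance
  have hcont : Continuous fun p :
      (Fin K → EuclideanSpace ℝ (Fin (n+1))) × EuclideanSpace ℝ (Fin (n+1)) =>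
      Metric.infDist p.2 (Set.range p.1) := by
    have he : (fun p :
        (Fin K → EuclideanSpace ℝ (Fin (n+1))) × EuclideanSpace ℝ (Fin (n+1)) =>
        Metric.infDist p.2 (Set.range p.1))
        = fun p => Finset.univ.inf' hne fun i => dist p.2 (p.1 i) := by
      funext p
      exact infDist_range_eq hne p.1 p.2
    rw [he]
    exact continuous_finset_inf' _ _
      (fun i => continuous_snd.dist ((continuous_apply i).comp continuous_fst)) hne
  set F : (Fin K → EuclideanSpace ℝ (Fin (n+1))) → EuclideanSpace ℝ (Fin (n+1)) → ℝ≥0∞ :=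
    fun c z => ENNReal.ofReal (Metric.infDist z (Set.range c) ^ 2) with hF
  have hFm : Measurable (Function.uncurry F) := by
    have hu : Function.uncurry F = fun p :
        (Fin K → EuclideanSpace ℝ (Fin (n+1))) × EuclideanSpace ℝ (Fin (n+1)) =>
        ENNReal.ofReal (Metric.infDist p.2 (Set.range p.1) ^ 2) := rfl
    rw [hu]
    exact (ENNReal.continuous_ofReal.comp (hcont.pow 2)).measurable
  -- the per-point bound
  have hzbound : ∀ z : EuclideanSpace ℝ (Fin (n+1)), ‖z‖ = 1 →
      ∫⁻ c, F c z ∂π ≤ ENNReal.ofReal BK := by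
    intro z hz
    have hFzm : AEMeasurable (fun c : Fin K → EuclideanSpace ℝ (Fin (n+1)) =>
        Metric.infDist z (Set.range c) ^ 2) π :=
      ((hcont.comp (continuous_id.prodMk continuous_const)).pow 2).measurable.aemeasurable
    rw [hF]
    simp only
    rw [lintegral_eq_lintegral_meas_lt π (ae_of_all _ fun c => by positivity) hFzm]
    have hprod : ∀ t ∈ Ioi (0:ℝ),
        π {c | t < Metric.infDist z (Set.range c) ^ 2}
        = μ ((Metric.closedBall z (Real.sqrt t))ᶜ) ^ K := by
      intro t ht
      have hset : {c : Fin K → EuclideanSpace ℝ (Fin (n+1)) |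
            t < Metric.infDist z (Set.range c) ^ 2}
          = Set.pi Set.univ fun _ : Fin K => (Metric.closedBall z (Real.sqrt t))ᶜ := by
        ext c
        simp only [mem_setOf_eq, Set.mem_univ_pi, mem_compl_iff, Metric.mem_closedBall, not_le]
        rw [infDist_range_eq hne]
        have hinf0 : 0 ≤ Finset.univ.inf' hne fun i => dist z (c i) := by
          obtain ⟨i, _, hi⟩ := Finset.exists_mem_eq_inf' hne fun i => dist z (c i)
          rw [hi]; exact dist_nonneg
        constructor
        · intro h i
          have h2 := Real.sqrt_lt_sqrt (le_of_lt ht) h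
          rw [Real.sqrt_sq hinf0] at h2
          have h3 := (Finset.lt_inf'_iff hne).1 h2 i (Finset.mem_univ i)
          rwa [dist_comm] at h3
        · intro h
          have h2 : Real.sqrt t < Finset.univ.inf' hne fun i => dist z (c i) :=
            (Finset.lt_inf'_iff hne).2 fun i _ => by rw [dist_comm]; exact h i
          have h3 := pow_lt_pow_left₀ h2 (Real.sqrt_nonneg t) (two_ne_zero)
          rwa [Real.sq_sqrt (le_of_lt ht)] at h3
      rw [hset, hπ, Measure.pi_pi]
      simp [Finset.prod_const, Finset.card_univ]
    rw [setLIntegral_congr_fun measurableSet_Ioi hprod]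
    have hr2pos : (0:ℝ) < r₀ ^ 2 := by positivity
    have hr24 : r₀ ^ 2 ≤ 4 := by nlinarith
    have hsplit : Ioi (0:ℝ) = Ioc 0 (r₀ ^ 2) ∪ (Ioc (r₀ ^ 2) 4 ∪ Ioi 4) := by
      rw [Set.Ioc_union_Ioi_eq_Ioi hr24, Set.Ioc_union_Ioi_eq_Ioi hr2pos.le]
    have hdisj1 : Disjoint (Ioc (0:ℝ) (r₀ ^ 2)) (Ioc (r₀ ^ 2) 4 ∪ Ioi 4) := by
      rw [Set.disjoint_left]
      rintro x hx (h | h)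
      · exact absurd hx.2 (not_le.2 h.1)
      · have : x ≤ (4:ℝ) := le_trans hx.2 hr24
        exact absurd this (not_le.2 h)
    have hdisj2 : Disjoint (Ioc (r₀ ^ 2) (4:ℝ)) (Ioi (4:ℝ)) := by
      rw [Set.disjoint_left]
      intro x hx h
      exact absurd hx.2 (not_le.2 h)
    rw [hsplit, lintegral_union (measurableSet_Ioc.union measurableSet_Ioi) hdisj1,
      lintegral_union measurableSet_Ioi hdisj2]
    -- cap bound for small radii
    have hcap2 : ∀ t ∈ Ioc (0:ℝ) (r₀ ^ 2),
        ENNReal.ofReal (κ * Real.sqrt t ^ n) ≤ μ (Metric.closedBall z (Real.sqrt t)) := by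
      intro t ht
      have hst0 : 0 < Real.sqrt t := Real.sqrt_pos.2 ht.1
      have hst1 : Real.sqrt t ≤ 1 := Real.sqrt_le_one.2 (le_trans ht.2 (by nlinarith))
      have hmono : nGam n r₀ ≤ nGam n (Real.sqrt t) := by
        rw [nGam_def, nGam_def, Real.sq_sqrt ht.1.le]
        have hle1 : t ≤ r₀ ^ 2 := ht.2
        have f1 : 1 - r₀ ^ 2 / 2 ≤ 1 - t / 2 := by linarith
        have f2 : Real.sqrt (1 - r₀ ^ 2 / 4) ^ n ≤ Real.sqrt (1 - t / 4) ^ n :=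
          pow_le_pow_left₀ (Real.sqrt_nonneg _) (Real.sqrt_le_sqrt (by linarith)) n
        have g0 : (0:ℝ) ≤ 1 - r₀ ^ 2 / 2 := by nlinarith
        exact mul_le_mul f1 f2 (pow_nonneg (Real.sqrt_nonneg _) n) (by nlinarith)
      calc ENNReal.ofReal (κ * Real.sqrt t ^ n)
          ≤ ENNReal.ofReal (nCst n * (nGam n (Real.sqrt t) * Real.sqrt t ^ n)) := by
            apply ENNReal.ofReal_le_ofReal
            rw [hκ, mul_assoc]
            exact mul_le_mul_of_nonneg_left
              (mul_le_mul_of_nonneg_right hmono (pow_nonneg (Real.sqrt_nonneg _) n)) hcstpos.le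
        _ ≤ μ (Metric.closedBall z (Real.sqrt t)) := cap_lower n hn μ hμ hz hst0 hst1
    have hP1 : ∫⁻ t in Ioc (0:ℝ) (r₀ ^ 2), μ ((Metric.closedBall z (Real.sqrt t))ᶜ) ^ K
        ≤ ENNReal.ofReal (Real.Gamma (2 / (n:ℝ) + 1) * lam ^ (-(2 / (n:ℝ)))) := by
      have hlamK : lam = (K:ℝ) * κ := by rw [hlam, hκ]; ring
      have hstep : ∀ t ∈ Ioc (0:ℝ) (r₀ ^ 2), μ ((Metric.closedBall z (Real.sqrt t))ᶜ) ^ K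
          ≤ ENNReal.ofReal (Real.exp (-lam * Real.sqrt t ^ n)) := by
        intro t ht
        have hb1 : μ ((Metric.closedBall z (Real.sqrt t))ᶜ)
            ≤ ENNReal.ofReal (Real.exp (-(κ * Real.sqrt t ^ n))) := by
          rw [measure_compl measurableSet_closedBall (measure_ne_top μ _), measure_univ]
          calc (1:ℝ≥0∞) - μ (Metric.closedBall z (Real.sqrt t))
              ≤ 1 - ENNReal.ofReal (κ * Real.sqrt t ^ n) := tsub_le_tsub_left (hcap2 t ht) 1
            _ = ENNReal.ofReal (1 - κ * Real.sqrt t ^ n) := by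
                rw [← ENNReal.ofReal_one]
                exact (ENNReal.ofReal_sub 1 (by positivity)).symm
            _ ≤ ENNReal.ofReal (Real.exp (-(κ * Real.sqrt t ^ n))) := by
                apply ENNReal.ofReal_le_ofReal
                have := Real.add_one_le_exp (-(κ * Real.sqrt t ^ n))
                linarith
        calc μ ((Metric.closedBall z (Real.sqrt t))ᶜ) ^ K
            ≤ ENNReal.ofReal (Real.exp (-(κ * Real.sqrt t ^ n))) ^ K :=
              pow_le_pow_left₀ zero_le hb1 K
          _ = ENNReal.ofReal (Real.exp (-(κ * Real.sqrt t ^ n)) ^ K) :=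
              (ENNReal.ofReal_pow (Real.exp_nonneg _) K).symm
          _ = ENNReal.ofReal (Real.exp (-lam * Real.sqrt t ^ n)) := by
              congr 1
              rw [← Real.exp_nat_mul]
              congr 1
              rw [hlamK]
              ring
      calc ∫⁻ t in Ioc (0:ℝ) (r₀ ^ 2), μ ((Metric.closedBall z (Real.sqrt t))ᶜ) ^ K
          ≤ ∫⁻ t in Ioc (0:ℝ) (r₀ ^ 2), ENNReal.ofReal (Real.exp (-lam * Real.sqrt t ^ n)) := by
            refine lintegral_mono_ae ?_
            filter_upwards [ae_restrict_mem measurableSet_Ioc] with t ht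
            exact hstep t ht
        _ ≤ ENNReal.ofReal (Real.Gamma (2 / (n:ℝ) + 1) * lam ^ (-(2 / (n:ℝ)))) :=
            gauss_piece n hn hlampos hr2pos
    have hP2 : ∫⁻ t in Ioc (r₀ ^ 2) (4:ℝ), μ ((Metric.closedBall z (Real.sqrt t))ᶜ) ^ K
        ≤ ENNReal.ofReal (4 * q ^ K) := by
      have hq' : ∀ t ∈ Ioc (r₀ ^ 2) (4:ℝ),
          μ ((Metric.closedBall z (Real.sqrt t))ᶜ) ^ K ≤ ENNReal.ofReal (q ^ K) := by
        intro t ht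
        have hr0t : r₀ ≤ Real.sqrt t := by
          have := Real.sqrt_le_sqrt (le_of_lt ht.1)
          rwa [Real.sqrt_sq h0.le] at this
        have hsub : Metric.closedBall z r₀ ⊆ Metric.closedBall z (Real.sqrt t) :=
          Metric.closedBall_subset_closedBall hr0t
        have hcapr : ENNReal.ofReal (κ * r₀ ^ n) ≤ μ (Metric.closedBall z (Real.sqrt t)) := by
          refine le_trans ?_ (measure_mono hsub)
          have hcr := cap_lower n hn μ hμ hz h0 h1
          calc ENNReal.ofReal (κ * r₀ ^ n)
              = ENNReal.ofReal (nCst n * (nGam n r₀ * r₀ ^ n)) := by rw [hκ, mul_assoc]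
            _ ≤ _ := hcr
        have hb1 : μ ((Metric.closedBall z (Real.sqrt t))ᶜ) ≤ ENNReal.ofReal q := by
          rw [measure_compl measurableSet_closedBall (measure_ne_top μ _), measure_univ, hqdef]
          calc (1:ℝ≥0∞) - μ (Metric.closedBall z (Real.sqrt t))
              ≤ 1 - ENNReal.ofReal (κ * r₀ ^ n) := tsub_le_tsub_left hcapr 1
            _ = ENNReal.ofReal (1 - κ * r₀ ^ n) := by
                rw [← ENNReal.ofReal_one]
                exact (ENNReal.ofReal_sub 1 (by positivity)).symm
        calc μ ((Metric.closedBall z (Real.sqrt t))ᶜ) ^ K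
            ≤ ENNReal.ofReal q ^ K := pow_le_pow_left₀ zero_le hb1 K
          _ = ENNReal.ofReal (q ^ K) := (ENNReal.ofReal_pow hq0 K).symm
      calc ∫⁻ t in Ioc (r₀ ^ 2) (4:ℝ), μ ((Metric.closedBall z (Real.sqrt t))ᶜ) ^ K
          ≤ ∫⁻ _ in Ioc (r₀ ^ 2) (4:ℝ), ENNReal.ofReal (q ^ K) := by
            refine lintegral_mono_ae ?_
            filter_upwards [ae_restrict_mem measurableSet_Ioc] with t ht
            exact hq' t ht
        _ = ENNReal.ofReal (q ^ K) * volume (Ioc (r₀ ^ 2) (4:ℝ)) := setLIntegral_const _ _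
        _ ≤ ENNReal.ofReal (q ^ K) * ENNReal.ofReal 4 := by
            apply mul_le_mul_right
            rw [Real.volume_Ioc]
            exact ENNReal.ofReal_le_ofReal (by nlinarith)
        _ = ENNReal.ofReal (4 * q ^ K) := by
            rw [← ENNReal.ofReal_mul (pow_nonneg hq0 K)]
            congr 1
            ring
    have hP3 : ∫⁻ t in Ioi (4:ℝ), μ ((Metric.closedBall z (Real.sqrt t))ᶜ) ^ K = 0 := by
      have hzero : ∀ t ∈ Ioi (4:ℝ), μ ((Metric.closedBall z (Real.sqrt t))ᶜ) ^ K = 0 := by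
        intro t ht
        have h2t : (2:ℝ) ≤ Real.sqrt t := by
          have h4 := Real.sqrt_le_sqrt (le_of_lt ht)
          rwa [show (4:ℝ) = 2 ^ 2 by norm_num, Real.sqrt_sq (by norm_num : (0:ℝ) ≤ 2)] at h4
        have hsub2 : Metric.sphere (0 : EuclideanSpace ℝ (Fin (n+1))) 1
            ⊆ Metric.closedBall z (Real.sqrt t) := by
          intro y hy
          rw [Metric.mem_closedBall]
          have hy1 : ‖y‖ = 1 := mem_sphere_zero_iff_norm.1 hy
          calc dist y z = ‖y - z‖ := dist_eq_norm y z
            _ ≤ ‖y‖ + ‖z‖ := norm_sub_le y z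
            _ = 2 := by rw [hy1, hz]; norm_num
            _ ≤ Real.sqrt t := h2t
        have hnull : μ ((Metric.closedBall z (Real.sqrt t))ᶜ) = 0 :=
          measure_mono_null (compl_subset_compl.2 hsub2) hμ.2.1
        rw [hnull, zero_pow (by omega : K ≠ 0)]
      rw [setLIntegral_congr_fun measurableSet_Ioi hzero, lintegral_zero]
    have hg1 : (0:ℝ) ≤ Real.Gamma (2 / (n:ℝ) + 1) * lam ^ (-(2 / (n:ℝ))) := by
      have hΓ : 0 < Real.Gamma (2 / (n:ℝ) + 1) := Real.Gamma_pos_of_pos (by positivity)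
      have : (0:ℝ) ≤ lam ^ (-(2 / (n:ℝ))) := Real.rpow_nonneg hlampos.le _
      positivity
    have hg2 : (0:ℝ) ≤ 4 * q ^ K := by
      have : (0:ℝ) ≤ q ^ K := pow_nonneg hq0 K
      positivity
    refine le_trans (add_le_add hP1 (add_le_add hP2 (le_of_eq hP3))) ?_
    rw [add_zero, ← ENNReal.ofReal_add hg1 hg2]
  -- averaging
  have hmain : ∫⁻ c, ∫⁻ z, F c z ∂μ ∂π ≤ ENNReal.ofReal BK := by
    rw [lintegral_lintegral_swap hFm.aemeasurable]
    have hres : μ.restrict (Metric.sphere (0 : EuclideanSpace ℝ (Fin (n+1))) 1) = μ :=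
      Measure.restrict_eq_self_of_ae_mem (by
        rw [ae_iff]
        exact hμ.2.1)
    calc ∫⁻ z, ∫⁻ c, F c z ∂π ∂μ
        = ∫⁻ z in Metric.sphere (0 : EuclideanSpace ℝ (Fin (n+1))) 1, ∫⁻ c, F c z ∂π ∂μ := by
          rw [hres]
      _ ≤ ∫⁻ _ in Metric.sphere (0 : EuclideanSpace ℝ (Fin (n+1))) 1,
            ENNReal.ofReal BK ∂μ := by
          refine lintegral_mono_ae ?_
          filter_upwards [ae_restrict_mem isClosed_sphere.measurableSet] with zz hzz
          exact hzbound zz (mem_sphere_zero_iff_norm.1 hzz)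
      _ ≤ ENNReal.ofReal BK := by
          rw [setLIntegral_const]
          calc ENNReal.ofReal BK * μ (Metric.sphere 0 1)
              ≤ ENNReal.ofReal BK * 1 := mul_le_mul_right prob_le_one _
            _ = ENNReal.ofReal BK := mul_one _
  -- choose a good codebook
  have hex : ∃ c, ∫⁻ z, F c z ∂μ ≤ ENNReal.ofReal BK + ENNReal.ofReal η := by
    by_contra hcon
    push_neg at hcon
    have hlow : ENNReal.ofReal BK + ENNReal.ofReal η ≤ ∫⁻ c, ∫⁻ z, F c z ∂μ ∂π := by
      calc ENNReal.ofReal BK + ENNReal.ofReal η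
          = ∫⁻ _, (ENNReal.ofReal BK + ENNReal.ofReal η) ∂π := by
            rw [lintegral_const, measure_univ, mul_one]
        _ ≤ _ := lintegral_mono fun c => (hcon c).le
    have hstrict : ENNReal.ofReal BK < ENNReal.ofReal BK + ENNReal.ofReal η :=
      ENNReal.lt_add_right ENNReal.ofReal_ne_top (ENNReal.ofReal_pos.2 hη).ne'
    exact absurd (hlow.trans hmain) hstrict.not_ge
  obtain ⟨c, hc⟩ := hex
  refine ⟨c, ?_⟩
  have hmeas3 : AEStronglyMeasurable
      (fun z : EuclideanSpace ℝ (Fin (n+1)) => Metric.infDist z (Set.range c) ^ 2) μ := by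
    have hcz : Continuous fun z : EuclideanSpace ℝ (Fin (n+1)) =>
        Metric.infDist z (Set.range c) ^ 2 :=
      ((hcont.comp ((continuous_const).prodMk continuous_id)).pow 2)
    exact hcz.aestronglyMeasurable
  have hint : ∫ z, Metric.infDist z (Set.range c) ^ 2 ∂μ = (∫⁻ z, F c z ∂μ).toReal := by
    rw [integral_eq_lintegral_of_nonneg_ae (ae_of_all _ fun z => by positivity) hmeas3]
  rw [hint]
  have htoReal : (∫⁻ z, F c z ∂μ).toReal ≤ BK + η := by
    have hmono2 := ENNReal.toReal_mono
      (ENNReal.add_ne_top.2 ⟨ENNReal.ofReal_ne_top, ENNReal.ofReal_ne_top⟩) hc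
    rwa [ENNReal.toReal_add ENNReal.ofReal_ne_top ENNReal.ofReal_ne_top,
      ENNReal.toReal_ofReal hBK0, ENNReal.toReal_ofReal hη.le] at hmono2
  calc (∫⁻ z, F c z ∂μ).toReal ≤ BK + η := htoReal
    _ = Real.Gamma (2 / (n:ℝ) + 1) * (nGam n r₀ * nCst n * (K:ℝ)) ^ (-(2 / (n:ℝ)))
          + 4 * (1 - nCst n * nGam n r₀ * r₀ ^ n) ^ K + η := by
        rw [hBK, hlam, hqdef, hκ]

lemma nGam_zero (n : ℕ) : nGam n 0 = 1 := by
  simp [nGam]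

lemma nGam_cont (n : ℕ) : Continuous (nGam n) := by
  unfold nGam
  continuity

lemma nCst_eq (n : ℕ) :
    nCst n = Real.Gamma (((n:ℝ) + 1) / 2)
      / (2 * Real.sqrt Real.pi * Real.Gamma (((n:ℝ) + 2) / 2)) := by
  have hπ : 0 < Real.sqrt Real.pi := Real.sqrt_pos.2 Real.pi_pos
  have hΓa : 0 < Real.Gamma ((n:ℝ) / 2 + 1) := Real.Gamma_pos_of_pos (by positivity)
  have hΓc : 0 < Real.Gamma (((n:ℝ) + 1) / 2) := Real.Gamma_pos_of_pos (by positivity)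
  have h1 : ((n + 1 : ℕ) : ℝ) / 2 + 1 = ((n:ℝ) + 1) / 2 + 1 := by push_cast; ring
  have h2 : Real.Gamma (((n:ℝ) + 1) / 2 + 1) = ((n:ℝ) + 1) / 2 * Real.Gamma (((n:ℝ) + 1) / 2) :=
    Real.Gamma_add_one (by positivity)
  have h3 : (n:ℝ) / 2 + 1 = ((n:ℝ) + 2) / 2 := by ring
  unfold nCst ballC
  rw [h1, h2, ← h3]
  have hne : ((n:ℝ) + 1) ≠ 0 := by positivity
  field_simp
  ring
theorem stmt15 (d : ℕ) (hd : 2 ≤ d)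
    (μ : Measure (EuclideanSpace ℝ (Fin d))) (hμ : IsUniformOnSphere μ)
    (D : ℕ → ℝ)
    (hD : ∀ K : ℕ, D K =
      sInf {v : ℝ | ∃ C : Finset (EuclideanSpace ℝ (Fin d)), C.Nonempty ∧ C.card ≤ K ∧
        v = ∫ z, Metric.infDist z (C : Set (EuclideanSpace ℝ (Fin d))) ^ 2 ∂μ}) :
    ∀ ε : ℝ, 0 < ε → ∀ᶠ K : ℕ in Filter.atTop,
      (K : ℝ) ^ (2 / ((d : ℝ) - 1)) * D K
        ≤ Real.Gamma (1 + 2 / ((d : ℝ) - 1)) *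
            (2 * Real.sqrt Real.pi * Real.Gamma (((d : ℝ) + 1) / 2) /
              Real.Gamma ((d : ℝ) / 2)) ^ (2 / ((d : ℝ) - 1)) + ε := by
  classical
  intro ε hε
  obtain ⟨n, rfl⟩ : ∃ n, d = n + 1 := ⟨d - 1, by omega⟩
  have hn : 1 ≤ n := by omega
  haveI : IsProbabilityMeasure μ := hμ.1
  have hNpos : (0:ℝ) < (n:ℝ) := by exact_mod_cast hn
  have hcstpos := nCst_pos n
  have hπ : 0 < Real.sqrt Real.pi := Real.sqrt_pos.2 Real.pi_pos
  have hΓc : 0 < Real.Gamma (((n:ℝ) + 1) / 2) := Real.Gamma_pos_of_pos (by positivity)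
  have hΓb : 0 < Real.Gamma (((n:ℝ) + 2) / 2) := Real.Gamma_pos_of_pos (by positivity)
  -- simplify the goal casts
  have hc1 : ((n + 1 : ℕ) : ℝ) - 1 = (n:ℝ) := by push_cast; ring
  have hc2 : (((n + 1 : ℕ) : ℝ) + 1) / 2 = ((n:ℝ) + 2) / 2 := by push_cast; ring
  have hc3 : ((n + 1 : ℕ) : ℝ) / 2 = ((n:ℝ) + 1) / 2 := by push_cast; ring
  rw [hc1, hc2, hc3]
  set θ : ℝ := 2 / (n:ℝ) with hθ
  have hθpos : 0 < θ := by rw [hθ]; positivity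
  -- the limiting constant
  have hAconst : 2 * Real.sqrt Real.pi * Real.Gamma (((n:ℝ) + 2) / 2)
      / Real.Gamma (((n:ℝ) + 1) / 2) = (nCst n)⁻¹ := by
    rw [nCst_eq n, inv_div]
  have hconst_eq : Real.Gamma (1 + θ) *
      (2 * Real.sqrt Real.pi * Real.Gamma (((n:ℝ) + 2) / 2)
        / Real.Gamma (((n:ℝ) + 1) / 2)) ^ θ
      = Real.Gamma (θ + 1) * (nCst n) ^ (-θ) := by
    rw [hAconst, Real.inv_rpow hcstpos.le, ← Real.rpow_neg hcstpos.le, add_comm]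
  rw [hconst_eq]
  -- choose r₀ by continuity
  set Ψ : ℝ → ℝ := fun s => Real.Gamma (θ + 1) * (nGam n s * nCst n) ^ (-θ) with hΨ
  have hΨ0 : Ψ 0 = Real.Gamma (θ + 1) * (nCst n) ^ (-θ) := by
    rw [hΨ]
    simp [nGam_zero]
  have hΨc : ContinuousAt Ψ 0 := by
    have h1 : Continuous fun s => nGam n s * nCst n := (nGam_cont n).mul continuous_const
    have h2 : ContinuousAt (fun s : ℝ => (nGam n s * nCst n) ^ (-θ)) 0 := by
      apply ContinuousAt.rpow_const h1.continuousAt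
      left
      rw [nGam_zero, one_mul]
      exact hcstpos.ne'
    exact continuousAt_const.mul h2
  have hev1 : ∀ᶠ s in nhdsWithin 0 (Ioi (0:ℝ)), Ψ s < Ψ 0 + ε / 2 :=
    (hΨc.tendsto.eventually_lt_const (lt_add_of_pos_right _ (half_pos hε))).filter_mono
      nhdsWithin_le_nhds
  have hev2 : ∀ᶠ s in nhdsWithin 0 (Ioi (0:ℝ)), s ∈ Ioi (0:ℝ) := eventually_mem_nhdsWithin
  have hev3 : ∀ᶠ s in nhdsWithin 0 (Ioi (0:ℝ)), s < 1 :=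
    Filter.eventually_of_mem (nhdsWithin_le_nhds (gt_mem_nhds (by norm_num : (0:ℝ) < 1)))
      fun x hx => hx
  obtain ⟨r₀, hr₀Ψ, hr₀pos, hr₀lt1⟩ := (hev1.and (hev2.and hev3)).exists
  have h0 : 0 < r₀ := hr₀pos
  have h1 : r₀ ≤ 1 := hr₀lt1.le
  -- basic bounds on q
  have hγ : 0 < nGam n r₀ := by
    unfold nGam
    have ha : (0:ℝ) < 1 - r₀ ^ 2 / 2 := by nlinarith
    have hb : (0:ℝ) < Real.sqrt (1 - r₀ ^ 2 / 4) := Real.sqrt_pos.2 (by nlinarith)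
    positivity
  set q : ℝ := 1 - nCst n * nGam n r₀ * r₀ ^ n with hqdef
  have hflb : nCst n * nGam n r₀ * r₀ ^ n ≤ 1 := by
    have hz1 : ‖(EuclideanSpace.single (0 : Fin (n+1)) (1:ℝ))‖ = 1 := by
      rw [EuclideanSpace.norm_single]; norm_num
    have hcap := cap_lower n hn μ hμ hz1 h0 h1
    have hle := ENNReal.ofReal_le_one.1 (hcap.trans prob_le_one)
    calc nCst n * nGam n r₀ * r₀ ^ n = nCst n * (nGam n r₀ * r₀ ^ n) := by ring
      _ ≤ 1 := hle
  have hflbpos : 0 < nCst n * nGam n r₀ * r₀ ^ n := by positivity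
  have hq0 : 0 ≤ q := by rw [hqdef]; linarith
  have hq1 : q < 1 := by rw [hqdef]; linarith
  -- the geometric term tends to zero
  have hgeo : Tendsto (fun K : ℕ => (K:ℝ) ^ θ * (4 * q ^ K)) atTop (nhds 0) := by
    have hsum : Summable fun k : ℕ => (k:ℝ) ^ 2 * q ^ k := by
      apply summable_pow_mul_geometric_of_norm_lt_one
      rw [Real.norm_eq_abs, abs_of_nonneg hq0]
      exact hq1
    have hten : Tendsto (fun k : ℕ => (k:ℝ) ^ 2 * q ^ k) atTop (nhds 0) :=
      hsum.tendsto_atTop_zero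
    have hten4 : Tendsto (fun k : ℕ => 4 * ((k:ℝ) ^ 2 * q ^ k)) atTop (nhds 0) := by
      simpa using hten.const_mul (4:ℝ)
    apply squeeze_zero'
    · filter_upwards [eventually_ge_atTop 1] with K hK
      have : (0:ℝ) ≤ (K:ℝ) ^ θ := Real.rpow_nonneg (Nat.cast_nonneg K) θ
      have hqK : (0:ℝ) ≤ q ^ K := pow_nonneg hq0 K
      positivity
    · filter_upwards [eventually_ge_atTop 1] with K hK
      have hK1 : (1:ℝ) ≤ (K:ℝ) := by exact_mod_cast hK
      have hKθ : (K:ℝ) ^ θ ≤ (K:ℝ) ^ (2:ℝ) := by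
        apply Real.rpow_le_rpow_of_exponent_le hK1
        rw [hθ]
        rw [div_le_iff₀ hNpos]
        have hn1 : (1:ℝ) ≤ (n:ℝ) := by exact_mod_cast hn
        nlinarith
      have hK2 : (K:ℝ) ^ (2:ℝ) = (K:ℝ) ^ (2:ℕ) := by
        rw [← Real.rpow_natCast]
        norm_num
      have hqK : (0:ℝ) ≤ 4 * q ^ K := by
        have : (0:ℝ) ≤ q ^ K := pow_nonneg hq0 K
        positivity
      calc (K:ℝ) ^ θ * (4 * q ^ K) ≤ (K:ℝ) ^ (2:ℝ) * (4 * q ^ K) :=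
            mul_le_mul_of_nonneg_right hKθ hqK
        _ = 4 * ((K:ℝ) ^ 2 * q ^ K) := by rw [hK2]; ring
    · exact hten4
  have hKev : ∀ᶠ K : ℕ in atTop, (K:ℝ) ^ θ * (4 * q ^ K) ≤ ε / 2 :=
    hgeo.eventually_le_const (half_pos hε)
  filter_upwards [hKev, eventually_ge_atTop 1] with K hK2 hK1
  have hKpos : (0:ℝ) < (K:ℝ) := by exact_mod_cast hK1
  -- bound on D K
  have hDK : D K ≤ Real.Gamma (θ + 1) * (nGam n r₀ * nCst n * (K:ℝ)) ^ (-θ)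
      + 4 * q ^ K := by
    rw [hD K]
    have hbdd : BddBelow {v : ℝ | ∃ C : Finset (EuclideanSpace ℝ (Fin (n+1))),
        C.Nonempty ∧ C.card ≤ K ∧
        v = ∫ z, Metric.infDist z (C : Set (EuclideanSpace ℝ (Fin (n+1)))) ^ 2 ∂μ} := by
      refine ⟨0, ?_⟩
      rintro v ⟨C, _, _, rfl⟩
      exact integral_nonneg fun z => by positivity
    apply le_of_forall_pos_le_add
    intro η hη
    obtain ⟨c, hc⟩ := distortion_le n K hn hK1 μ hμ h0 h1 hη
    have hmem : (∫ z, Metric.infDist z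
          ((Finset.image c Finset.univ : Finset (EuclideanSpace ℝ (Fin (n+1)))) :
            Set (EuclideanSpace ℝ (Fin (n+1)))) ^ 2 ∂μ)
        ∈ {v : ℝ | ∃ C : Finset (EuclideanSpace ℝ (Fin (n+1))),
          C.Nonempty ∧ C.card ≤ K ∧
          v = ∫ z, Metric.infDist z (C : Set (EuclideanSpace ℝ (Fin (n+1)))) ^ 2 ∂μ} := by
      refine ⟨Finset.image c Finset.univ, ?_, ?_, rfl⟩
      · haveI : Nonempty (Fin K) := ⟨⟨0, hK1⟩⟩
        exact (Finset.univ_nonempty).image c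
      · calc (Finset.image c Finset.univ).card ≤ Finset.univ.card := Finset.card_image_le
          _ = K := by simp
    have hcoe : ((Finset.image c Finset.univ : Finset (EuclideanSpace ℝ (Fin (n+1)))) :
        Set (EuclideanSpace ℝ (Fin (n+1)))) = Set.range c := by
      simp
    calc sInf {v : ℝ | ∃ C : Finset (EuclideanSpace ℝ (Fin (n+1))),
          C.Nonempty ∧ C.card ≤ K ∧
          v = ∫ z, Metric.infDist z (C : Set (EuclideanSpace ℝ (Fin (n+1)))) ^ 2 ∂μ}
        ≤ ∫ z, Metric.infDist z
            ((Finset.image c Finset.univ : Finset (EuclideanSpace ℝ (Fin (n+1)))) :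
              Set (EuclideanSpace ℝ (Fin (n+1)))) ^ 2 ∂μ := csInf_le hbdd hmem
      _ = ∫ z, Metric.infDist z (Set.range c) ^ 2 ∂μ := by rw [hcoe]
      _ ≤ Real.Gamma (2 / (n:ℝ) + 1) * (nGam n r₀ * nCst n * (K:ℝ)) ^ (-(2 / (n:ℝ)))
            + 4 * (1 - nCst n * nGam n r₀ * r₀ ^ n) ^ K + η := hc
      _ = Real.Gamma (θ + 1) * (nGam n r₀ * nCst n * (K:ℝ)) ^ (-θ) + 4 * q ^ K + η := by
          rw [hθ, hqdef]
  -- put it together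
  have hKθ0 : (0:ℝ) ≤ (K:ℝ) ^ θ := Real.rpow_nonneg (Nat.cast_nonneg K) θ
  have hsplitK : (K:ℝ) ^ θ * ((nGam n r₀ * nCst n * (K:ℝ)) ^ (-θ))
      = (nGam n r₀ * nCst n) ^ (-θ) := by
    rw [Real.mul_rpow (by positivity) hKpos.le, ← mul_assoc, mul_comm ((K:ℝ) ^ θ), mul_assoc,
      ← Real.rpow_add hKpos]
    simp
  calc (K:ℝ) ^ θ * D K
      ≤ (K:ℝ) ^ θ * (Real.Gamma (θ + 1) * (nGam n r₀ * nCst n * (K:ℝ)) ^ (-θ) + 4 * q ^ K) :=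
        mul_le_mul_of_nonneg_left hDK hKθ0
    _ = Ψ r₀ + (K:ℝ) ^ θ * (4 * q ^ K) := by
        rw [hΨ]
        simp only
        rw [mul_add, ← mul_assoc, mul_comm ((K:ℝ) ^ θ) (Real.Gamma (θ + 1)), mul_assoc
          (Real.Gamma (θ + 1)), hsplitK]
    _ ≤ (Ψ 0 + ε / 2) + ε / 2 := add_le_add hr₀Ψ.le hK2
    _ = Real.Gamma (θ + 1) * (nCst n) ^ (-θ) + ε := by rw [hΨ0]; ring
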